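/- Lipschitz estimate for differential operators composed with a diffeomorphism: Let U ⊆ ℝ^d be open, m ≥ 0, and let F be a differential operator on U of order at most m, i.e. Fψ(x) = Σ_{|w| ≤ m} f^w(x) ∂_w ψ(x), where w ranges over words over {1,…,d} of length at most m, ∂_w = ∂_{w₁} ∘ ⋯ ∘ ∂_{w_{|w|}}, and the coefficients f^w : U → ℝ are smooth. Let φ : U → φ(U) ⊆ ℝ^d be a C^{m+1} diffeomorphism onto its image, and apply F componentwise: Fφ = (Fφ¹, …, Fφ^d). Then for every compact set K ⊆ U there is a constant C ≥ 0, depending only on F, K and φ, such that |Fφ(x) − Fφ(y)| ≤ C |φ(x) − φ(y)| for all x, y ∈ K. -/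

import Mathlib

/-! Statement 14: Lipschitz estimate for a differential operator applied componentwise
to a diffeomorphism (Lemma 4.6 of the paper). -/

open Set

noncomputable section

/-- The partial derivative `∂_i ψ` on `ℝ^k`. -/
def pderivE {k : ℕ} (i : Fin k) (ψ : EuclideanSpace ℝ (Fin k) → ℝ) :
    EuclideanSpace ℝ (Fin k) → ℝ :=
  fun x => fderiv ℝ ψ x (EuclideanSpace.single i 1)

/-- The iterated partial derivative `∂_w ψ = ∂_{w₁} ∘ ⋯ ∘ ∂_{w_n} ψ` associated with a
word `w` over the alphabet `{1,…,k}`. -/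
def pderivWord {k : ℕ} : List (Fin k) → (EuclideanSpace ℝ (Fin k) → ℝ) →
    EuclideanSpace ℝ (Fin k) → ℝ
  | [], ψ => ψ
  | i :: w, ψ => pderivE i (pderivWord w ψ)

/-- The differential operator of order at most `m` with coefficients `f`, namely
`Fψ(x) = Σ_{|w| ≤ m} f^w(x) ∂_w ψ(x)`, words `w` of length `n ≤ m` being encoded as
maps `Fin n → Fin d`. -/
def diffOp {d : ℕ} (m : ℕ) (f : (n : ℕ) → (Fin n → Fin d) → EuclideanSpace ℝ (Fin d) → ℝ)
    (ψ : EuclideanSpace ℝ (Fin d) → ℝ) : EuclideanSpace ℝ (Fin d) → ℝ :=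
  fun x => ∑ n ∈ Finset.range (m + 1), ∑ w : Fin n → Fin d,
    f n w x * pderivWord (List.ofFn w) ψ x

set_option maxHeartbeats 1000000
set_option synthInstance.maxHeartbeats 1000000

theorem pderivWord_contDiffOn_aux {k : ℕ} {U : Set (EuclideanSpace ℝ (Fin k))} (hU : IsOpen U)
    (w : List (Fin k)) (j : ℕ) (ψ : EuclideanSpace ℝ (Fin k) → ℝ)
    (hψ : ContDiffOn ℝ ((w.length + j : ℕ) : ℕ∞) ψ U) :
    ContDiffOn ℝ (j : ℕ∞) (pderivWord w ψ) U := by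
  induction w generalizing j with
  | nil => simpa [pderivWord] using hψ
  | cons i w ih =>
    have h1 : ContDiffOn ℝ ((j + 1 : ℕ) : ℕ∞) (pderivWord w ψ) U := by
      have he : (i :: w).length + j = w.length + (j + 1) := by
        simp [List.length_cons]; ring
      rw [he] at hψ
      exact ih (j + 1) hψ
    have h2 : ContDiffOn ℝ (j : ℕ∞) (fderiv ℝ (pderivWord w ψ)) U := by
      apply h1.fderiv_of_isOpen hU
      norm_cast
    exact (h2.clm_apply contDiffOn_const : _)

theorem diffOp_contDiffOn {d : ℕ} (m : ℕ) {U : Set (EuclideanSpace ℝ (Fin d))} (hU : IsOpen U)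
    (f : (n : ℕ) → (Fin n → Fin d) → EuclideanSpace ℝ (Fin d) → ℝ)
    (hf : ∀ (n : ℕ) (w : Fin n → Fin d), ContDiffOn ℝ (⊤ : ℕ∞) (f n w) U)
    (ψ : EuclideanSpace ℝ (Fin d) → ℝ)
    (hψ : ContDiffOn ℝ ((m + 1 : ℕ) : ℕ∞) ψ U) :
    ContDiffOn ℝ (1 : ℕ∞) (diffOp m f ψ) U := by
  unfold diffOp
  apply ContDiffOn.sum
  intro n hn
  apply ContDiffOn.sum
  intro w _
  have hn' : n ≤ m := Nat.lt_succ_iff.mp (Finset.mem_range.mp hn)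
  have h1 : ContDiffOn ℝ (((List.ofFn w).length + 1 : ℕ) : ℕ∞) ψ U := by
    apply hψ.of_le
    simp only [List.length_ofFn]
    exact_mod_cast Nat.add_le_add_right hn' 1
  have h2 := pderivWord_contDiffOn_aux hU (List.ofFn w) 1 ψ h1
  exact ((hf n w).of_le (by exact_mod_cast (le_top : (1:ℕ∞) ≤ ⊤))).mul (by exact_mod_cast h2)

/-- Let `F` be a differential operator of order at most `m` on an
open set `U ⊆ ℝ^d` with smooth coefficients, and let `φ : U → ℝ^d` be a `C^{m+1}`
diffeomorphism onto its (open) image with `C¹` inverse.  Applying `F` componentwise to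
`φ`, for every compact `K ⊆ U` there is `C ≥ 0` with
`‖Fφ(x) - Fφ(y)‖ ≤ C ‖φ(x) - φ(y)‖` for all `x, y ∈ K`. -/
theorem diffOp_comp_diffeo_lipschitz
    {d : ℕ} (m : ℕ) {U : Set (EuclideanSpace ℝ (Fin d))} (hU : IsOpen U)
    (f : (n : ℕ) → (Fin n → Fin d) → EuclideanSpace ℝ (Fin d) → ℝ)
    (hf : ∀ (n : ℕ) (w : Fin n → Fin d), ContDiffOn ℝ (⊤ : ℕ∞) (f n w) U)
    (φ : EuclideanSpace ℝ (Fin d) → EuclideanSpace ℝ (Fin d))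
    (hφ : ContDiffOn ℝ ((m + 1 : ℕ) : ℕ∞) φ U)
    (hφinj : InjOn φ U)
    (hφim : IsOpen (φ '' U))
    (φinv : EuclideanSpace ℝ (Fin d) → EuclideanSpace ℝ (Fin d))
    (hφinv : ∀ x ∈ U, φinv (φ x) = x)
    (hφinvC1 : ContDiffOn ℝ (1 : ℕ∞) φinv (φ '' U))
    {K : Set (EuclideanSpace ℝ (Fin d))} (hK : IsCompact K) (hKU : K ⊆ U) :
    ∃ C : ℝ, 0 ≤ C ∧ ∀ x ∈ K, ∀ y ∈ K,
      ‖((EuclideanSpace.equiv (Fin d) ℝ).symm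
          (fun i => diffOp m f (fun z => φ z i) x) : EuclideanSpace ℝ (Fin d)) -
        (EuclideanSpace.equiv (Fin d) ℝ).symm
          (fun i => diffOp m f (fun z => φ z i) y)‖ ≤ C * ‖φ x - φ y‖ := by
  classical
  -- componentwise smoothness of G
  set G : EuclideanSpace ℝ (Fin d) → EuclideanSpace ℝ (Fin d) := fun x =>
    (EuclideanSpace.equiv (Fin d) ℝ).symm (fun i => diffOp m f (fun z => φ z i) x) with hG
  have hGsm : ContDiffOn ℝ (1 : ℕ∞) G U := by
    apply contDiffOn_euclidean.2
    intro i
    have : (fun x => G x i) = diffOp m f (fun z => φ z i) := rfl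
    rw [this]
    apply diffOp_contDiffOn m hU f hf
    have hproj : ContDiffOn ℝ ((m + 1 : ℕ) : ℕ∞) (fun z => φ z i) U := by
      exact (contDiffOn_euclidean.1 hφ i)
    exact hproj
  -- H := G ∘ φinv on V := φ '' U
  set V : Set (EuclideanSpace ℝ (Fin d)) := φ '' U with hV
  have hVopen : IsOpen V := hφim
  have hmaps : MapsTo φinv V U := by
    rintro p ⟨x, hx, rfl⟩
    rw [hφinv x hx]; exact hx
  set H : EuclideanSpace ℝ (Fin d) → EuclideanSpace ℝ (Fin d) := G ∘ φinv with hH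
  have hHsm : ContDiffOn ℝ (1 : ℕ∞) H V := hGsm.comp hφinvC1 hmaps
  -- compact image
  set L : Set (EuclideanSpace ℝ (Fin d)) := φ '' K with hL
  have hLcomp : IsCompact L := hK.image_of_continuousOn ((hφ.continuousOn).mono hKU)
  have hLV : L ⊆ V := image_mono hKU
  obtain ⟨ε, hε, hthick⟩ := hLcomp.exists_cthickening_subset_open hVopen hLV
  set K' : Set (EuclideanSpace ℝ (Fin d)) := Metric.cthickening ε L with hK'
  have hK'comp : IsCompact K' := hLcomp.cthickening
  have hK'V : K' ⊆ V := hthick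
  -- bound on derivative on K'
  have hderivcont : ContinuousOn (fderiv ℝ H) V :=
    hHsm.continuousOn_fderiv_of_isOpen hVopen le_rfl
  obtain ⟨M, hM⟩ := hK'comp.exists_bound_of_continuousOn (hderivcont.mono hK'V)
  -- bound on H on L
  obtain ⟨B, hB⟩ := hLcomp.exists_bound_of_continuousOn
    (hHsm.continuousOn.mono hLV)
  have hB0 : ∀ p ∈ L, ‖H p‖ ≤ B := by simpa using hB
  have hM0 : ∀ p ∈ K', ‖fderiv ℝ H p‖ ≤ M := by simpa using hM
  set C : ℝ := max (max M (2 * B / ε)) 0 with hC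
  have hC0 : 0 ≤ C := le_max_right _ _
  refine ⟨C, hC0, ?_⟩
  -- main Lipschitz estimate for H on L
  have key : ∀ p ∈ L, ∀ q ∈ L, ‖H p - H q‖ ≤ C * ‖p - q‖ := by
    intro p hp q hq
    by_cases hd : dist p q ≤ ε
    · have hball : Metric.closedBall q ε ⊆ V := by
        refine subset_trans ?_ hK'V
        intro z hz
        exact Metric.mem_cthickening_of_dist_le z q ε L hq (Metric.mem_closedBall.mp hz)
      have hdiff : ∀ z ∈ Metric.closedBall q ε, DifferentiableAt ℝ H z := by
        intro z hz
        exact ((hHsm.contDiffAt (hVopen.mem_nhds (hball hz))).differentiableAt (by simp))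
      have hbound : ∀ z ∈ Metric.closedBall q ε, ‖fderiv ℝ H z‖ ≤ C := by
        intro z hz
        refine le_trans (hM0 z ?_) (le_trans (le_max_left M _) (le_max_left _ 0))
        exact Metric.mem_cthickening_of_dist_le z q ε L hq (Metric.mem_closedBall.mp hz)
      have hqmem : q ∈ Metric.closedBall q ε := Metric.mem_closedBall_self (le_of_lt hε)
      have hpmem : p ∈ Metric.closedBall q ε := by
        rw [Metric.mem_closedBall]; exact hd
      exact (convex_closedBall q ε).norm_image_sub_le_of_norm_fderiv_le hdiff hbound hqmem hpmem
    · push_neg at hd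
      have h1 : ‖H p - H q‖ ≤ 2 * B := by
        calc ‖H p - H q‖ ≤ ‖H p‖ + ‖H q‖ := norm_sub_le _ _
        _ ≤ B + B := add_le_add (hB0 p hp) (hB0 q hq)
        _ = 2 * B := by ring
      have hB' : 0 ≤ B := le_trans (norm_nonneg _) (hB0 p hp)
      have h2 : 2 * B ≤ (2 * B / ε) * ‖p - q‖ := by
        rw [div_mul_eq_mul_div, le_div_iff₀ hε]
        have : ε ≤ ‖p - q‖ := by
          rw [← dist_eq_norm]; exact le_of_lt hd
        nlinarith [norm_nonneg (p - q)]
      have h3 : (2 * B / ε) * ‖p - q‖ ≤ C * ‖p - q‖ := by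
        apply mul_le_mul_of_nonneg_right _ (norm_nonneg _)
        exact le_trans (le_max_right M _) (le_max_left _ 0)
      linarith
  intro x hx y hy
  have hGx : G x = H (φ x) := by
    have h := hφinv x (hKU hx)
    simp only [hH, Function.comp_apply, h]
  have hGy : G y = H (φ y) := by
    have h := hφinv y (hKU hy)
    simp only [hH, Function.comp_apply, h]
  have := key (φ x) (mem_image_of_mem φ hx) (φ y) (mem_image_of_mem φ hy)
  rw [← hGx, ← hGy] at this
  exact this


end
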